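/- Let q ≥ 4, let M = {(1,0), (0,1), (−1,1)} be the semiqueen's move set, let F = F_{⌊q/2⌋}, and let z_1, …, z_q ∈ ℤ² be the golden rectangle positions: z_1 = (1,0) and, for 2 ≤ i ≤ q, z_i = (F_{⌊i/2⌋}, 0) if i ≡ 0 (mod 4); z_i = (F_{⌊i/2⌋}, F_{⌊i/2⌋−1}) if i ≡ 1 (mod 4); z_i = (0, F_{⌊i/2⌋}) if i ≡ 2 (mod 4); z_i = (F_{⌊i/2⌋−1}, F_{⌊i/2⌋}) if i ≡ 3 (mod 4). Then the point w = (z_1/F, …, z_q/F) lies in ([0,1]²)^q, is a vertex of the inside-out polytope (([0,1]²)^q, A_M^q), and has denominator Δ(w) = F_{⌊q/2⌋}. -/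

import Mathlib

/-- A basic move: a nonzero integer vector with coprime coordinates. -/
def IsBasicMove (m : ℤ × ℤ) : Prop := m ≠ 0 ∧ Int.gcd m.1 m.2 = 1

/-- Two integer vectors are parallel if one is a rational scalar multiple of the other. -/
def IntPara (a b : ℤ × ℤ) : Prop :=
  (∃ r : ℚ, (b.1 : ℚ) = r * a.1 ∧ (b.2 : ℚ) = r * a.2) ∨
  (∃ r : ℚ, (a.1 : ℚ) = r * b.1 ∧ (a.2 : ℚ) = r * b.2)

/-- A move set: a finite set of basic moves, no two of which are parallel. -/
def IsMoveSet (M : Finset (ℤ × ℤ)) : Prop :=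
  (∀ m ∈ M, IsBasicMove m) ∧ ∀ m ∈ M, ∀ m' ∈ M, m ≠ m' → ¬ IntPara m m'

/-- The polytope ([0,1]²)^q of configurations of q pieces on the square board. -/
def cube (q : ℕ) : Set (Fin q → ℝ × ℝ) :=
  {z | ∀ i, (z i).1 ∈ Set.Icc (0:ℝ) 1 ∧ (z i).2 ∈ Set.Icc (0:ℝ) 1}

/-- The move arrangement: hyperplanes (z_j - z_i)·(d,-c) = 0 for moves m = (c,d) ∈ M. -/
def moveHyps (M : Finset (ℤ × ℤ)) (q : ℕ) : Set (Set (Fin q → ℝ × ℝ)) :=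
  {H | ∃ m ∈ M, ∃ i j : Fin q, i < j ∧
    H = {z | ((z j).1 - (z i).1) * (m.2 : ℝ) - ((z j).2 - (z i).2) * (m.1 : ℝ) = 0}}

/-- The facet hyperplanes of the hypercube ([0,1]²)^q. -/
def facetHyps (q : ℕ) : Set (Set (Fin q → ℝ × ℝ)) :=
  {H | ∃ i : Fin q,
    H = {z | (z i).1 = 0} ∨ H = {z | (z i).1 = 1} ∨
    H = {z | (z i).2 = 0} ∨ H = {z | (z i).2 = 1}}

/-- A vertex of the inside-out polytope (([0,1]²)^q, A_M^q): a point of the cube such that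
the intersection of all move hyperplanes and facet hyperplanes containing it is exactly it. -/
def IsVertex (M : Finset (ℤ × ℤ)) (q : ℕ) (z : Fin q → ℝ × ℝ) : Prop :=
  z ∈ cube q ∧
  ⋂₀ {H | H ∈ moveHyps M q ∪ facetHyps q ∧ z ∈ H} = {z}

/-- `N` is a positive integer making `N • z` integral. -/
def IsIntegralizer (N : ℕ) {q : ℕ} (z : Fin q → ℝ × ℝ) : Prop :=
  0 < N ∧ ∀ i, (∃ a : ℤ, (N : ℝ) * (z i).1 = (a : ℝ)) ∧ (∃ b : ℤ, (N : ℝ) * (z i).2 = (b : ℝ))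

/-- The denominator Δ(z): the least positive integer N with N • z integral. -/
noncomputable def denom {q : ℕ} (z : Fin q → ℝ × ℝ) : ℕ := sInf {N | IsIntegralizer N z}

/-- The number of nonattacking configurations of q riders with move set M on the n×n board. -/
noncomputable def uCount (M : Finset (ℤ × ℤ)) (q n : ℕ) : ℕ :=
  Nat.card {S : Finset (ℤ × ℤ) //
    (∀ p ∈ S, p ∈ Finset.Icc (1 : ℤ) n ×ˢ Finset.Icc (1 : ℤ) n) ∧ S.card = q ∧
    ∀ a ∈ S, ∀ b ∈ S, a ≠ b → ∀ m ∈ M, ¬ ∃ t : ℤ, b - a = t • m}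

/-- Fibonacci numbers indexed so that F_0 = F_1 = 1, as integers. -/
def F (k : ℕ) : ℤ := (Nat.fib (k + 1) : ℤ)

/-- The golden rectangle positions of the semiqueens: z_1 = (1,0) and, for i ≥ 2,
z_i as dictated by i mod 4. -/
def goldenPos (i : ℕ) : ℤ × ℤ :=
  if i = 1 then (1, 0)
  else if i % 4 = 0 then (F (i / 2), 0)
  else if i % 4 = 1 then (F (i / 2), F (i / 2 - 1))
  else if i % 4 = 2 then (0, F (i / 2))
  else (F (i / 2 - 1), F (i / 2))

lemma F0 : F 0 = 1 := rfl
lemma F1 : F 1 = 1 := rfl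
lemma Fadd (j : ℕ) : F (j+2) = F (j+1) + F j := by
  unfold F
  rw [show j+2+1 = (j+1)+2 by ring, Nat.fib_add_two]
  push_cast; ring
lemma Fmono {i j : ℕ} (h : i ≤ j) : F i ≤ F j := by
  unfold F; exact_mod_cast Nat.fib_mono (by omega)
lemma Fpos (i : ℕ) : 0 < F i := by
  unfold F; exact_mod_cast Nat.fib_pos.mpr (by omega)
lemma gp0 : goldenPos 1 = (1, 0) := rfl
lemma gpA (t : ℕ) : goldenPos (4*t+5) = (F (2*t+2), F (2*t+1)) := by
  have h1 : (4*t+5) ≠ 1 := by omega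
  have h2 : (4*t+5) % 4 = 1 := by omega
  have h3 : (4*t+5)/2 = 2*t+2 := by omega
  simp [goldenPos, h1, h2, h3]
lemma gpB (t : ℕ) : goldenPos (4*t+2) = (0, F (2*t+1)) := by
  have h1 : (4*t+2) ≠ 1 := by omega
  have h2 : (4*t+2) % 4 = 2 := by omega
  have h3 : (4*t+2)/2 = 2*t+1 := by omega
  simp [goldenPos, h1, h2, h3]
lemma gpC (t : ℕ) : goldenPos (4*t+3) = (F (2*t), F (2*t+1)) := by
  have h1 : (4*t+3) ≠ 1 := by omega
  have h2 : (4*t+3) % 4 = 3 := by omega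
  have h3 : (4*t+3)/2 = 2*t+1 := by omega
  simp [goldenPos, h1, h2, h3]
lemma gpD (t : ℕ) : goldenPos (4*t+4) = (F (2*t+2), 0) := by
  have h1 : (4*t+4) ≠ 1 := by omega
  have h2 : (4*t+4) % 4 = 0 := by omega
  have h3 : (4*t+4)/2 = 2*t+2 := by omega
  simp [goldenPos, h1, h2, h3]

lemma gp_bound (q i : ℕ) (h1 : 1 ≤ i) (h2 : i ≤ q) :
    0 ≤ (goldenPos i).1 ∧ (goldenPos i).1 ≤ F (q/2) ∧
    0 ≤ (goldenPos i).2 ∧ (goldenPos i).2 ≤ F (q/2) := by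
  have hF0 : (1:ℤ) ≤ F (q/2) := F0 ▸ Fmono (Nat.zero_le _)
  rcases eq_or_ne i 1 with rfl | hne
  · rw [gp0]; refine ⟨by norm_num, by simpa using hF0, le_refl _, by simp; linarith⟩
  · have hmod : i % 4 = 0 ∨ i % 4 = 1 ∨ i % 4 = 2 ∨ i % 4 = 3 := by omega
    rcases hmod with h | h | h | h
    · obtain ⟨t, rfl⟩ : ∃ t, i = 4*t+4 := ⟨(i-4)/4, by omega⟩
      rw [gpD]
      exact ⟨le_of_lt (Fpos _), Fmono (by omega), le_refl _,
        le_trans (by norm_num) hF0⟩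
    · obtain ⟨t, rfl⟩ : ∃ t, i = 4*t+5 := ⟨(i-5)/4, by omega⟩
      rw [gpA]
      exact ⟨le_of_lt (Fpos _), Fmono (by omega), le_of_lt (Fpos _), Fmono (by omega)⟩
    · obtain ⟨t, rfl⟩ : ∃ t, i = 4*t+2 := ⟨(i-2)/4, by omega⟩
      rw [gpB]
      exact ⟨le_refl _, le_trans (by norm_num) hF0, le_of_lt (Fpos _), Fmono (by omega)⟩
    · obtain ⟨t, rfl⟩ : ∃ t, i = 4*t+3 := ⟨(i-3)/4, by omega⟩
      rw [gpC]
      exact ⟨le_of_lt (Fpos _), Fmono (by omega), le_of_lt (Fpos _), Fmono (by omega)⟩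

theorem stmt16 (q : ℕ) (hq : 4 ≤ q)
    (w : Fin q → ℝ × ℝ)
    (hw : w = fun i : Fin q =>
      (((goldenPos ((i : ℕ) + 1)).1 : ℝ) / (Nat.fib (q / 2 + 1) : ℝ),
        ((goldenPos ((i : ℕ) + 1)).2 : ℝ) / (Nat.fib (q / 2 + 1) : ℝ))) :
    w ∈ cube q ∧ IsVertex {((1:ℤ), (0:ℤ)), ((0:ℤ), (1:ℤ)), ((-1:ℤ), (1:ℤ))} q w ∧
      denom w = Nat.fib (q / 2 + 1) := by
  have hφpos : (0:ℝ) < (Nat.fib (q/2+1) : ℝ) := by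
    exact_mod_cast Nat.fib_pos.mpr (by omega)
  have hφne : (Nat.fib (q/2+1) : ℝ) ≠ 0 := ne_of_gt hφpos
  set φR : ℝ := (Nat.fib (q/2+1) : ℝ) with hφdef
  have hFcast : ((F (q/2) : ℤ) : ℝ) = φR := by unfold F; push_cast; rfl
  have hwx : ∀ i : Fin q, (w i).1 = ((goldenPos ((i:ℕ)+1)).1 : ℝ) / φR := by
    intro i; rw [hw]
  have hwy : ∀ i : Fin q, (w i).2 = ((goldenPos ((i:ℕ)+1)).2 : ℝ) / φR := by
    intro i; rw [hw]
  have hcube : w ∈ cube q := by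
    intro i
    obtain ⟨b1, b2, b3, b4⟩ := gp_bound q ((i:ℕ)+1) (by omega) (by omega)
    rw [hwx i, hwy i]
    refine ⟨⟨div_nonneg (by exact_mod_cast b1) (le_of_lt hφpos), ?_⟩,
      ⟨div_nonneg (by exact_mod_cast b3) (le_of_lt hφpos), ?_⟩⟩
    · rw [div_le_one hφpos, ← hFcast]; exact_mod_cast b2
    · rw [div_le_one hφpos, ← hFcast]; exact_mod_cast b4
  refine ⟨hcube, ⟨hcube, ?_⟩, ?_⟩
  · -- the intersection equals {w}
    apply Set.Subset.antisymm
    · intro z hz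
      have hz' : ∀ H, (H ∈ moveHyps {((1:ℤ), (0:ℤ)), ((0:ℤ), (1:ℤ)), ((-1:ℤ), (1:ℤ))} q
          ∪ facetHyps q ∧ w ∈ H) → z ∈ H := fun H hH => hz H hH
      have hmove : ∀ m ∈ ({((1:ℤ), (0:ℤ)), ((0:ℤ), (1:ℤ)), ((-1:ℤ), (1:ℤ))} : Finset (ℤ×ℤ)),
          ∀ u v : Fin q, u < v →
          ((w v).1 - (w u).1) * (m.2:ℝ) - ((w v).2 - (w u).2) * (m.1:ℝ) = 0 →
          ((z v).1 - (z u).1) * (m.2:ℝ) - ((z v).2 - (z u).2) * (m.1:ℝ) = 0 := by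
        intro m hm u v huv hweq
        exact hz' _ ⟨Or.inl ⟨m, hm, u, v, huv, rfl⟩, hweq⟩
      have hfx0 : ∀ u : Fin q, (w u).1 = 0 → (z u).1 = 0 :=
        fun u h => hz' _ ⟨Or.inr ⟨u, Or.inl rfl⟩, h⟩
      have hfx1 : ∀ u : Fin q, (w u).1 = 1 → (z u).1 = 1 :=
        fun u h => hz' _ ⟨Or.inr ⟨u, Or.inr (Or.inl rfl)⟩, h⟩
      have hfy0 : ∀ u : Fin q, (w u).2 = 0 → (z u).2 = 0 :=
        fun u h => hz' _ ⟨Or.inr ⟨u, Or.inr (Or.inr (Or.inl rfl))⟩, h⟩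
      have hfy1 : ∀ u : Fin q, (w u).2 = 1 → (z u).2 = 1 :=
        fun u h => hz' _ ⟨Or.inr ⟨u, Or.inr (Or.inr (Or.inr rfl))⟩, h⟩
      have hhoriz : ∀ u v : Fin q, u < v →
          (goldenPos ((v:ℕ)+1)).2 = (goldenPos ((u:ℕ)+1)).2 → (z v).2 = (z u).2 := by
        intro u v huv h
        have hm : ((1:ℤ),(0:ℤ)) ∈ ({((1:ℤ), (0:ℤ)), ((0:ℤ), (1:ℤ)), ((-1:ℤ), (1:ℤ))} : Finset (ℤ×ℤ)) := by decide
        have := hmove _ hm u v huv (by rw [hwx u, hwx v, hwy u, hwy v, h]; push_cast; ring)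
        push_cast at this; linarith
      have hvert : ∀ u v : Fin q, u < v →
          (goldenPos ((v:ℕ)+1)).1 = (goldenPos ((u:ℕ)+1)).1 → (z v).1 = (z u).1 := by
        intro u v huv h
        have hm : ((0:ℤ),(1:ℤ)) ∈ ({((1:ℤ), (0:ℤ)), ((0:ℤ), (1:ℤ)), ((-1:ℤ), (1:ℤ))} : Finset (ℤ×ℤ)) := by decide
        have := hmove _ hm u v huv (by rw [hwx u, hwx v, hwy u, hwy v, h]; push_cast; ring)
        push_cast at this; linarith
      have hdiag : ∀ u v : Fin q, u < v →
          (goldenPos ((v:ℕ)+1)).1 + (goldenPos ((v:ℕ)+1)).2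
            = (goldenPos ((u:ℕ)+1)).1 + (goldenPos ((u:ℕ)+1)).2 →
          (z v).1 + (z v).2 = (z u).1 + (z u).2 := by
        intro u v huv h
        have hm : ((-1:ℤ),(1:ℤ)) ∈ ({((1:ℤ), (0:ℤ)), ((0:ℤ), (1:ℤ)), ((-1:ℤ), (1:ℤ))} : Finset (ℤ×ℤ)) := by decide
        have h' : ((goldenPos ((v:ℕ)+1)).1 : ℝ) + ((goldenPos ((v:ℕ)+1)).2 : ℝ)
            = ((goldenPos ((u:ℕ)+1)).1 : ℝ) + ((goldenPos ((u:ℕ)+1)).2 : ℝ) := by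
          exact_mod_cast congrArg (fun n : ℤ => (n:ℝ)) h
        have := hmove _ hm u v huv (by
          rw [hwx u, hwx v, hwy u, hwy v]; push_cast
          field_simp
          linarith)
        push_cast at this; linarith
      have hwx0 : ∀ (u : Fin q), (goldenPos ((u:ℕ)+1)).1 = 0 → (w u).1 = 0 := by
        intro u h; rw [hwx u, h]; norm_num
      have hwy0 : ∀ (u : Fin q), (goldenPos ((u:ℕ)+1)).2 = 0 → (w u).2 = 0 := by
        intro u h; rw [hwy u, h]; norm_num
      set a : ℝ := (z ⟨0, by omega⟩).1 with ha_def
      have key : ∀ k, ∀ hk : k < q,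
          (z ⟨k,hk⟩).1 = a * ((goldenPos (k+1)).1 : ℝ) ∧
          (z ⟨k,hk⟩).2 = a * ((goldenPos (k+1)).2 : ℝ) := by
        intro k
        induction k using Nat.strong_induction_on with
        | _ k IH =>
          intro hk
          rcases Nat.lt_or_ge k 1 with h0 | h1
          · obtain rfl : k = 0 := by omega
            constructor
            · rw [gp0]; push_cast; simp [ha_def]
            · rw [gp0]
              have h := hfy0 ⟨0,hk⟩ (hwy0 _ (by rw [gp0]))
              rw [h]; push_cast; ring
          · have hmod : k % 4 = 0 ∨ k % 4 = 1 ∨ k % 4 = 2 ∨ k % 4 = 3 := by omega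
            rcases hmod with h | h | h | h
            · -- k = 4t+4, piece 4t+5, type A = (F(2t+2), F(2t+1))
              obtain ⟨t, rfl⟩ : ∃ t, k = 4*t+4 := ⟨(k-4)/4, by omega⟩
              have hk1 : 4*t+3 < q := by omega
              have hk2 : 4*t+2 < q := by omega
              obtain ⟨ih1x, -⟩ := IH (4*t+3) (by omega) hk1
              obtain ⟨-, ih2y⟩ := IH (4*t+2) (by omega) hk2
              rw [show 4*t+3+1 = 4*t+4 from rfl, gpD] at ih1x
              rw [show 4*t+2+1 = 4*t+3 from rfl, gpC] at ih2y
              rw [show 4*t+4+1 = 4*t+5 from rfl, gpA]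
              constructor
              · have hx := hvert ⟨4*t+3, hk1⟩ ⟨4*t+4, hk⟩ (Fin.mk_lt_mk.mpr (by omega))
                  (show (goldenPos (4*t+4+1)).1 = (goldenPos (4*t+3+1)).1 by
                    rw [show 4*t+4+1 = 4*t+5 from rfl, show 4*t+3+1 = 4*t+4 from rfl, gpA, gpD])
                rw [hx, ih1x]
              · have hy := hhoriz ⟨4*t+2, hk2⟩ ⟨4*t+4, hk⟩ (Fin.mk_lt_mk.mpr (by omega))
                  (show (goldenPos (4*t+4+1)).2 = (goldenPos (4*t+2+1)).2 by
                    rw [show 4*t+4+1 = 4*t+5 from rfl, show 4*t+2+1 = 4*t+3 from rfl, gpA, gpC])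
                rw [hy, ih2y]
            · -- k = 4t+1, piece 4t+2, type B = (0, F(2t+1))
              obtain ⟨t, rfl⟩ : ∃ t, k = 4*t+1 := ⟨k/4, by omega⟩
              have hk1 : 4*t < q := by omega
              obtain ⟨ih1x, ih1y⟩ := IH (4*t) (by omega) hk1
              rw [show 4*t+1+1 = 4*t+2 from rfl, gpB]
              have hx0 : (z ⟨4*t+1, hk⟩).1 = 0 :=
                hfx0 _ (hwx0 _ (by rw [show 4*t+1+1 = 4*t+2 from rfl, gpB]))
              -- sum identity
              have hsum : (goldenPos (4*t+1+1)).1 + (goldenPos (4*t+1+1)).2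
                  = (goldenPos (4*t+0+1)).1 + (goldenPos (4*t+0+1)).2 := by
                rw [show 4*t+1+1 = 4*t+2 from rfl, gpB]
                rcases t with _ | s
                · rw [show 4*0+0+1 = 1 from rfl, gp0]
                  simp [F1]
                · rw [show 4*(s+1)+0+1 = 4*s+5 from by ring, gpA]
                  have hF := Fadd (2*s+1)
                  rw [show 2*s+1+2 = 2*(s+1)+1 from by ring, show 2*s+1+1 = 2*s+2 from by ring] at hF
                  simp [hF]
              have hd := hdiag ⟨4*t, hk1⟩ ⟨4*t+1, hk⟩ (Fin.mk_lt_mk.mpr (by omega))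
                (show (goldenPos (4*t+1+1)).1 + (goldenPos (4*t+1+1)).2
                  = (goldenPos (4*t+1)).1 + (goldenPos (4*t+1)).2 from hsum)
              refine ⟨by rw [hx0]; push_cast; ring, ?_⟩
              -- z_v.2 = a * F(2t+1)
              have hsum' : ((goldenPos (4*t+2)).2 : ℝ)
                  = ((goldenPos (4*t+1)).1 : ℝ) + ((goldenPos (4*t+1)).2 : ℝ) := by
                have := hsum
                rw [show 4*t+1+1 = 4*t+2 from rfl, show 4*t+0+1 = 4*t+1 from by ring, gpB] at this
                push_cast [gpB]
                exact_mod_cast by simpa [gpB] using this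
              rw [gpB] at hsum'
              linear_combination hd - hx0 + ih1x + ih1y - a * hsum'
            · -- k = 4t+2, piece 4t+3, type C = (F(2t), F(2t+1))
              obtain ⟨t, rfl⟩ : ∃ t, k = 4*t+2 := ⟨k/4, by omega⟩
              have hk1 : 4*t+1 < q := by omega
              have hk2 : 4*t < q := by omega
              obtain ⟨-, ih1y⟩ := IH (4*t+1) (by omega) hk1
              obtain ⟨ih2x, -⟩ := IH (4*t) (by omega) hk2
              rw [show 4*t+1+1 = 4*t+2 from rfl, gpB] at ih1y
              rw [show 4*t+2+1 = 4*t+3 from rfl, gpC]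
              constructor
              · -- x from pair (4t, 4t+2)
                have hxeq : (goldenPos (4*t+2+1)).1 = (goldenPos (4*t+1)).1 := by
                  rw [show 4*t+2+1 = 4*t+3 from rfl, gpC]
                  rcases t with _ | s
                  · rw [show 4*0+1 = 1 from rfl, gp0, show 2*0 = 0 from rfl, F0]
                  · rw [show 4*(s+1)+1 = 4*s+5 from by ring, gpA,
                      show 2*(s+1) = 2*s+2 from by ring]
                have hx := hvert ⟨4*t, hk2⟩ ⟨4*t+2, hk⟩ (Fin.mk_lt_mk.mpr (by omega)) hxeq
                rw [hx, ih2x]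
                have hxeq' := hxeq
                rw [show 4*t+2+1 = 4*t+3 from rfl, gpC] at hxeq'
                rw [show (4*t:ℕ)+1 = 4*t+1 from rfl]
                congr 1
                exact_mod_cast congrArg (fun n : ℤ => (n:ℝ)) hxeq'.symm
              · have hy := hhoriz ⟨4*t+1, hk1⟩ ⟨4*t+2, hk⟩ (Fin.mk_lt_mk.mpr (by omega))
                  (show (goldenPos (4*t+2+1)).2 = (goldenPos (4*t+1+1)).2 by
                    rw [show 4*t+2+1 = 4*t+3 from rfl, show 4*t+1+1 = 4*t+2 from rfl, gpC, gpB])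
                rw [hy, ih1y]
            · -- k = 4t+3, piece 4t+4, type D = (F(2t+2), 0)
              obtain ⟨t, rfl⟩ : ∃ t, k = 4*t+3 := ⟨k/4, by omega⟩
              have hk1 : 4*t+2 < q := by omega
              obtain ⟨ih1x, ih1y⟩ := IH (4*t+2) (by omega) hk1
              rw [show 4*t+2+1 = 4*t+3 from rfl, gpC] at ih1x ih1y
              rw [show 4*t+3+1 = 4*t+4 from rfl, gpD]
              have hy0 : (z ⟨4*t+3, hk⟩).2 = 0 :=
                hfy0 _ (hwy0 _ (by rw [show 4*t+3+1 = 4*t+4 from rfl, gpD]))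
              have hF := Fadd (2*t)
              rw [show 2*t+2 = 2*t+2 from rfl, show 2*t+1 = 2*t+1 from rfl] at hF
              have hFr : ((F (2*t+2) : ℤ) : ℝ) = ((F (2*t+1) : ℤ):ℝ) + ((F (2*t) : ℤ):ℝ) := by
                exact_mod_cast congrArg (fun n : ℤ => (n:ℝ)) hF
              have hsum : (goldenPos (4*t+3+1)).1 + (goldenPos (4*t+3+1)).2
                  = (goldenPos (4*t+2+1)).1 + (goldenPos (4*t+2+1)).2 := by
                rw [show 4*t+3+1 = 4*t+4 from rfl, show 4*t+2+1 = 4*t+3 from rfl, gpD, gpC]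
                simpa using by linarith [hF]
              have hd := hdiag ⟨4*t+2, hk1⟩ ⟨4*t+3, hk⟩ (Fin.mk_lt_mk.mpr (by omega)) hsum
              refine ⟨?_, by rw [hy0]; push_cast; ring⟩
              linear_combination hd - hy0 + ih1x + ih1y - a * hFr
      -- the scale
      have hscale : a * φR = 1 := by
        obtain ⟨t, ht⟩ : ∃ t, (q = 4*t+4 ∨ q = 4*t+5) ∨ (q = 4*t+6 ∨ q = 4*t+7) :=
          ⟨(q-4)/4, by omega⟩
        rcases ht with ht | ht
        · have hk : 4*t+3 < q := by omega
          obtain ⟨kx, -⟩ := key (4*t+3) hk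
          rw [show 4*t+3+1 = 4*t+4 from rfl, gpD] at kx
          have hF2 : ((F (2*t+2) : ℤ) : ℝ) = φR := by
            rw [show 2*t+2 = q/2 from by omega]; exact hFcast
          have h1 : (z ⟨4*t+3, hk⟩).1 = 1 := hfx1 _ (by
            rw [hwx]
            show ((goldenPos (4*t+3+1)).1 : ℝ)/φR = 1
            rw [show 4*t+3+1 = 4*t+4 from rfl, gpD]
            show ((F (2*t+2) : ℤ) : ℝ)/φR = 1
            rw [hF2, div_self hφne])
          rw [← hF2]
          simp only [Prod.fst] at kx
          nlinarith [kx, h1]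
        · have hk : 4*t+5 < q := by omega
          obtain ⟨-, ky⟩ := key (4*t+5) hk
          rw [show 4*t+5+1 = 4*(t+1)+2 from by ring, gpB] at ky
          have hF2 : ((F (2*(t+1)+1) : ℤ) : ℝ) = φR := by
            rw [show 2*(t+1)+1 = q/2 from by omega]; exact hFcast
          have h1 : (z ⟨4*t+5, hk⟩).2 = 1 := hfy1 _ (by
            rw [hwy]
            show ((goldenPos (4*t+5+1)).2 : ℝ)/φR = 1
            rw [show 4*t+5+1 = 4*(t+1)+2 from by ring, gpB]
            show ((F (2*(t+1)+1) : ℤ) : ℝ)/φR = 1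
            rw [hF2, div_self hφne])
          rw [← hF2]
          simp only [Prod.snd] at ky
          nlinarith [ky, h1]
      have hainv : a = 1/φR := by
        rw [eq_div_iff hφne]; exact hscale
      show z ∈ ({w} : Set (Fin q → ℝ × ℝ))
      simp only [Set.mem_singleton_iff]
      funext i
      obtain ⟨kx, ky⟩ := key i.val i.isLt
      have hi : (⟨i.val, i.isLt⟩ : Fin q) = i := rfl
      rw [hi] at kx ky
      rw [Prod.ext_iff]
      constructor
      · rw [kx, hwx i, hainv]; ring
      · rw [ky, hwy i, hainv]; ring
    · intro z hz
      rcases hz with rfl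
      intro H hH
      exact hH.2
  · -- denominator
    have hint : IsIntegralizer (Nat.fib (q/2+1)) w := by
      refine ⟨Nat.fib_pos.mpr (by omega), fun i =>
        ⟨⟨(goldenPos ((i:ℕ)+1)).1, ?_⟩, ⟨(goldenPos ((i:ℕ)+1)).2, ?_⟩⟩⟩
      · rw [hwx i]; field_simp; rw [← hφdef]; ring
      · rw [hwy i]; field_simp; rw [← hφdef]; ring
    have hlow : ∀ N, IsIntegralizer N w → Nat.fib (q/2+1) ≤ N := by
      intro N hN
      obtain ⟨hNpos, hNi⟩ := hN
      obtain ⟨⟨c, hc⟩, -⟩ := hNi ⟨0, by omega⟩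
      rw [hwx ⟨0, by omega⟩] at hc
      have e : ((⟨0, by omega⟩ : Fin q) : ℕ) + 1 = 1 := rfl
      rw [e, gp0] at hc
      have hc1 : (N:ℝ) * (1/φR) = c := by
        rw [← hc]; norm_num
      have hc' : (N:ℝ) = c * φR := by
        field_simp at hc1; linarith
      have hN1 : (1:ℝ) ≤ (N:ℝ) := by exact_mod_cast hNpos
      have hc0 : (0:ℝ) < (c:ℝ) := by nlinarith
      have hc2 : (1:ℝ) ≤ (c:ℝ) := by exact_mod_cast (show (1:ℤ) ≤ c by exact_mod_cast hc0)
      have hfin : φR ≤ (N:ℝ) := by nlinarith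
      rw [hφdef] at hfin
      exact_mod_cast hfin
    have hne : {N | IsIntegralizer N w}.Nonempty := ⟨_, hint⟩
    exact le_antisymm (Nat.sInf_le hint) (hlow _ (Nat.sInf_mem hne))
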